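/- On coast arcs (zero thrust), the Hamiltonian first integral holds: the function t ↦ -(γ/|r|³)(r·p) - r'·p' is constant whenever r'' = -(γ/|r|³) r and p'' = (3γ/|r|⁵)(r·p) r - (γ/|r|³) p. -/

import Mathlib

open Matrix

/-- Euclidean norm of a vector in ℝ³. -/
noncomputable def e3norm (x : Fin 3 → ℝ) : ℝ := Real.sqrt (x ⬝ᵥ x)

lemma hasDerivAt_dot3 {f g : ℝ → Fin 3 → ℝ} {f' g' : Fin 3 → ℝ} {t : ℝ}
    (hf : HasDerivAt f f' t) (hg : HasDerivAt g g' t) :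
    HasDerivAt (fun t => f t ⬝ᵥ g t) (f' ⬝ᵥ g t + f t ⬝ᵥ g') t := by
  simp only [dotProduct]
  have h : ∀ i ∈ Finset.univ, HasDerivAt (fun t => f t i * g t i) (f' i * g t i + f t i * g' i) t :=
    fun i _ => ((hasDerivAt_pi.mp hf i).mul (hasDerivAt_pi.mp hg i))
  convert HasDerivAt.fun_sum h using 1
  · rfl
  · rfl
  simp [Finset.sum_add_distrib]

lemma e3norm_pos {x : Fin 3 → ℝ} (hx : x ≠ 0) : 0 < e3norm x := by
  have h : 0 < x ⬝ᵥ x := by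
    have := dotProduct_self_eq_zero (v := x)
    have hle : 0 ≤ x ⬝ᵥ x := Finset.sum_nonneg fun i _ => mul_self_nonneg _
    rcases hle.lt_or_eq with h | h
    · exact h
    · exact absurd (this.mp h.symm) hx
  exact Real.sqrt_pos.mpr h

lemma e3norm_sq {x : Fin 3 → ℝ} : (e3norm x) ^ 2 = x ⬝ᵥ x := by
  have hle : 0 ≤ x ⬝ᵥ x := Finset.sum_nonneg fun i _ => mul_self_nonneg _
  rw [e3norm]; exact Real.sq_sqrt hle

theorem stmt9 (γ : ℝ) (hγ : 0 < γ) (r p : ℝ → Fin 3 → ℝ)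
    (hrne : ∀ t, r t ≠ 0)
    (hr1 : Differentiable ℝ r) (hr2 : Differentiable ℝ (deriv r))
    (hp1 : Differentiable ℝ p) (hp2 : Differentiable ℝ (deriv p))
    (hreq : ∀ t, deriv (deriv r) t = -(γ / (e3norm (r t))^3) • r t)
    (hpeq : ∀ t, deriv (deriv p) t =
      (3 * γ / (e3norm (r t))^5 * (r t ⬝ᵥ p t)) • r t - (γ / (e3norm (r t))^3) • p t) :
    ∀ t s, -(γ / (e3norm (r t))^3) * (r t ⬝ᵥ p t) - deriv r t ⬝ᵥ deriv p t =
           -(γ / (e3norm (r s))^3) * (r s ⬝ᵥ p s) - deriv r s ⬝ᵥ deriv p s := by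
  intro t s
  set F : ℝ → ℝ := fun t =>
    -γ * ((e3norm (r t)) ^ 3)⁻¹ * (r t ⬝ᵥ p t) - deriv r t ⬝ᵥ deriv p t with hFdef
  have key : ∀ u, HasDerivAt F 0 u := by
    intro u
    have hn : 0 < e3norm (r u) := e3norm_pos (hrne u)
    set n : ℝ := e3norm (r u) with hndef
    have hn2 : n ^ 2 = r u ⬝ᵥ r u := e3norm_sq
    have hQne : r u ⬝ᵥ r u ≠ 0 := by rw [← hn2]; positivity
    have hr : HasDerivAt r (deriv r u) u := (hr1 u).hasDerivAt
    have hp : HasDerivAt p (deriv p u) u := (hp1 u).hasDerivAt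
    have hr' : HasDerivAt (deriv r) (deriv (deriv r) u) u := (hr2 u).hasDerivAt
    have hp' : HasDerivAt (deriv p) (deriv (deriv p) u) u := (hp2 u).hasDerivAt
    have hQ : HasDerivAt (fun t => r t ⬝ᵥ r t)
        (deriv r u ⬝ᵥ r u + r u ⬝ᵥ deriv r u) u := hasDerivAt_dot3 hr hr
    have hN : HasDerivAt (fun t => e3norm (r t))
        (1 / (2 * Real.sqrt (r u ⬝ᵥ r u)) * (deriv r u ⬝ᵥ r u + r u ⬝ᵥ deriv r u)) u := by
      have := (Real.hasDerivAt_sqrt hQne).comp u hQ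
      simpa [e3norm, Function.comp_def] using this
    have hN3 : HasDerivAt (fun t => (e3norm (r t)) ^ 3)
        ((3 : ℕ) * n ^ 2 *
          (1 / (2 * Real.sqrt (r u ⬝ᵥ r u)) * (deriv r u ⬝ᵥ r u + r u ⬝ᵥ deriv r u))) u := by
      simpa using hN.fun_pow 3
    have hn3ne : n ^ 3 ≠ 0 := by positivity
    have hInv := hN3.fun_inv hn3ne
    have hRP : HasDerivAt (fun t => r t ⬝ᵥ p t)
        (deriv r u ⬝ᵥ p u + r u ⬝ᵥ deriv p u) u := hasDerivAt_dot3 hr hp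
    have hT1 := (hInv.const_mul (-γ)).fun_mul hRP
    have hT2 : HasDerivAt (fun t => deriv r t ⬝ᵥ deriv p t)
        (deriv (deriv r) u ⬝ᵥ deriv p u + deriv r u ⬝ᵥ deriv (deriv p) u) u :=
      hasDerivAt_dot3 hr' hp'
    have hTot := hT1.fun_sub hT2
    rw [hFdef]
    convert hTot using 1
    · rfl
    · rfl
    rw [hreq u, hpeq u]
    have hsq : Real.sqrt (r u ⬝ᵥ r u) = n := rfl
    rw [hsq]
    simp only [smul_dotProduct, dotProduct_smul, sub_dotProduct,
      dotProduct_sub, smul_eq_mul]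
    rw [show r u ⬝ᵥ deriv r u = deriv r u ⬝ᵥ r u from dotProduct_comm _ _,
        show r u ⬝ᵥ deriv p u = deriv p u ⬝ᵥ r u from dotProduct_comm _ _,
        show deriv r u ⬝ᵥ r u = r u ⬝ᵥ deriv r u from dotProduct_comm _ _,
        show deriv p u ⬝ᵥ r u = r u ⬝ᵥ deriv p u from dotProduct_comm _ _,
        show deriv r u ⬝ᵥ p u = p u ⬝ᵥ deriv r u from dotProduct_comm _ _] at *
    rw [← hndef]
    have hnne : n ≠ 0 := hn.ne'
    set a : ℝ := r u ⬝ᵥ p u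
    set b : ℝ := r u ⬝ᵥ deriv r u
    set c : ℝ := r u ⬝ᵥ deriv p u
    set d : ℝ := p u ⬝ᵥ deriv r u
    field_simp
    ring
  have hc : F t = F s :=
    is_const_of_deriv_eq_zero (fun u => (key u).differentiableAt)
      (fun u => (key u).deriv) t s
  have hE : ∀ u, -(γ / (e3norm (r u))^3) * (r u ⬝ᵥ p u) - deriv r u ⬝ᵥ deriv p u = F u := by
    intro u; rw [hFdef]; ring
  rw [hE t, hE s, hc]
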